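/- Let k ≥ 1 and n ≥ 1 be integers. The multiple qt-Catalan number at the rectangular partition k̄ = (k, …, k) (n copies), defined by C_{k̄} = [∏_{i=1}^n (1 − q t^{n−i})/(1 − q^{k+1} t^{n−i})] · ∏_{i=1}^n (q^{1+k} t^{n−i}; q)_k / (q t^{n−i}; q)_k, satisfies C_{k̄} = ∏_{i=1}^n (q^{2+k} t^{n−i}; q)_{k−1} / (q^2 t^{n−i}; q)_{k−1}. In particular, C_{1̄} = 1 for every n. -/

import Mathlib

open Finset

noncomputable section

/-- Finite q-Pochhammer symbol `(a; q)_m = ∏_{j=0}^{m-1} (1 - a q^j)`, `(a;q)_0 = 1`. -/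
def qPoch (a q : ℂ) (m : ℕ) : ℂ := ∏ j ∈ Finset.range m, (1 - a * q ^ j)

/-- Multiple qt-Catalan number at the rectangular partition `k̄ = (k, …, k)` (n copies):
`C_{k̄} = [∏_{i=1}^n (1 - q t^{n-i})/(1 - q^{k+1} t^{n-i})]
          · ∏_{i=1}^n (q^{1+k} t^{n-i}; q)_k / (q t^{n-i}; q)_k`
(0-based `i`, so `t^{n-i}` is `t^{n-1-i}`). -/
def catalanRect (n k : ℕ) (q t : ℂ) : ℂ :=
  (∏ i : Fin n, (1 - q * t ^ (n - 1 - (i : ℕ))) / (1 - q ^ (k + 1) * t ^ (n - 1 - (i : ℕ)))) *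
    ∏ i : Fin n, qPoch (q ^ (1 + k) * t ^ (n - 1 - (i : ℕ))) q k /
      qPoch (q * t ^ (n - 1 - (i : ℕ))) q k

lemma qPoch_succ (a q : ℂ) (m : ℕ) :
    qPoch a q (m + 1) = (1 - a) * qPoch (a * q) q m := by
  unfold qPoch
  rw [Finset.prod_range_succ']
  simp only [pow_zero, mul_one]
  rw [mul_comm]
  congr 1
  apply Finset.prod_congr rfl
  intro j _
  ring

lemma qPoch1 (q x : ℂ) (m : ℕ) :
    qPoch (q * x) q (m + 1) = (1 - q * x) * qPoch (q ^ 2 * x) q m := by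
  rw [qPoch_succ]
  congr 1
  congr 1
  ring

lemma qPoch2 (q x : ℂ) (m : ℕ) :
    qPoch (q ^ (1 + (m + 1)) * x) q (m + 1)
      = (1 - q ^ (m + 2) * x) * qPoch (q ^ (2 + (m + 1)) * x) q m := by
  rw [qPoch_succ]
  congr 2
  · congr 1; ring
  · ring

/-- `C_{k̄} = ∏_{i=1}^n (q^{2+k} t^{n-i}; q)_{k-1} / (q^2 t^{n-i}; q)_{k-1}`,
and in particular `C_{1̄} = 1` for every `n`. -/
theorem catalanRect_eq (n k : ℕ) (hn : 1 ≤ n) (hk : 1 ≤ k) (q t : ℂ)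
    (h1 : ∀ i : Fin n, 1 - q ^ (k + 1) * t ^ (n - 1 - (i : ℕ)) ≠ 0)
    (h2 : ∀ i : Fin n, qPoch (q * t ^ (n - 1 - (i : ℕ))) q k ≠ 0)
    (h3 : ∀ i : Fin n, qPoch (q ^ 2 * t ^ (n - 1 - (i : ℕ))) q (k - 1) ≠ 0)
    (h4 : ∀ i : Fin n, 1 - q ^ 2 * t ^ (n - 1 - (i : ℕ)) ≠ 0)
    (h5 : ∀ i : Fin n, 1 - q * t ^ (n - 1 - (i : ℕ)) ≠ 0) :
    catalanRect n k q t =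
        (∏ i : Fin n, qPoch (q ^ (2 + k) * t ^ (n - 1 - (i : ℕ))) q (k - 1) /
          qPoch (q ^ 2 * t ^ (n - 1 - (i : ℕ))) q (k - 1)) ∧
      catalanRect n 1 q t = 1 := by
  constructor
  · obtain ⟨m, rfl⟩ : ∃ m, k = m + 1 := ⟨k - 1, (Nat.succ_pred_eq_of_pos hk).symm⟩
    unfold catalanRect
    rw [← Finset.prod_mul_distrib]
    apply Finset.prod_congr rfl
    intro i _
    set x := t ^ (n - 1 - (i : ℕ)) with hx
    have e1 := qPoch1 q x m
    have e2 := qPoch2 q x m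
    simp only [Nat.add_sub_cancel] at *
    rw [e1, e2]
    have hqx : (1 : ℂ) - q * x ≠ 0 := h5 i
    have hA : (1 : ℂ) - q ^ (m + 1 + 1) * x ≠ 0 := h1 i
    have hB : qPoch (q ^ 2 * x) q m ≠ 0 := h3 i
    have hA' : (1 : ℂ) - q ^ (m + 2) * x ≠ 0 := hA
    field_simp
    have hC : (1 : ℂ) - x * q ^ 2 * q ^ m ≠ 0 := by
      have := hA'; ring_nf at this ⊢; exact this
    ring_nf
    linear_combination (qPoch (x * q ^ 3 * q ^ m) q m) * mul_inv_cancel₀ hC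
  · unfold catalanRect
    rw [← Finset.prod_mul_distrib]
    apply Finset.prod_eq_one
    intro i _
    set x := t ^ (n - 1 - (i : ℕ)) with hx
    have e1 : qPoch (q * x) q 1 = 1 - q * x := by
      unfold qPoch; simp
    have e2 : qPoch (q ^ (1 + 1) * x) q 1 = 1 - q ^ 2 * x := by
      unfold qPoch; simp
    rw [e1, e2]
    have hqx : (1 : ℂ) - q * x ≠ 0 := h5 i
    have h2x : (1 : ℂ) - q ^ 2 * x ≠ 0 := h4 i
    have h2x' : (1 : ℂ) - q ^ (1 + 1) * x ≠ 0 := by convert h2x using 3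
    field_simp
    have h2x'' : (1 : ℂ) - x * q ^ (1 + 1) ≠ 0 := by
      have := h2x; ring_nf at this ⊢; exact this
    rw [div_eq_one_iff_eq h2x'']
    ring

end
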